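/- Let k ≥ 1 and let F_k = {F ⊆ [n] : |F| > kn/(2k+1)}. Then the induced subgraph of the Kneser cube on F_k contains no odd cycle C_{2k+1}; consequently 2^n - vex(n, C_{2k+1}) ≤ Σ_{i=0}^{⌊kn/(2k+1)⌋} C(n,i). -/

import Mathlib

/-- Adjacency in the Kneser cube: two distinct disjoint subsets of `[n]`. -/
def knAdj {n : ℕ} (A B : Finset (Fin n)) : Prop := A ≠ B ∧ Disjoint A B

/-- The induced subgraph of the Kneser cube on the family `F` contains a copy of the graph `G`
(as a subgraph). -/
def containsCopy {V : Type*} (G : SimpleGraph V) {n : ℕ} (F : Finset (Finset (Fin n))) : Prop :=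
  ∃ f : V → Finset (Fin n), Function.Injective f ∧ (∀ v, f v ∈ F) ∧
    ∀ u v, G.Adj u v → knAdj (f u) (f v)

/-- `vex(n, G)`: the maximum size of a family `F ⊆ 2^[n]` such that the induced subgraph
of the Kneser cube on `F` is `G`-free. -/
noncomputable def vex (n : ℕ) {V : Type*} (G : SimpleGraph V) : ℕ :=
  sSup {m | ∃ F : Finset (Finset (Fin n)), ¬ containsCopy G F ∧ F.card = m}

theorem indep_cycle (k : ℕ) (hk : 1 ≤ k) (S : Finset (Fin (2*k+1)))
    (hind : ∀ u ∈ S, ∀ v ∈ S, ¬ (SimpleGraph.cycleGraph (2*k+1)).Adj u v) :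
    S.card ≤ k := by
  have hdisj : Disjoint S (S.image (· + 1)) := by
    rw [Finset.disjoint_right]
    intro v hv hv'
    obtain ⟨u, hu, rfl⟩ := Finset.mem_image.mp hv
    apply hind u hu _ hv'
    rw [SimpleGraph.cycleGraph_adj']
    right
    have : (u + 1) - u = (1 : Fin (2*k+1)) := add_sub_cancel_left u 1
    rw [this, Fin.val_one']
    exact Nat.mod_eq_of_lt (by omega)
  have hcard : (S ∪ S.image (· + 1)).card = 2 * S.card := by
    rw [Finset.card_union_of_disjoint hdisj, Finset.card_image_of_injective _ (add_left_injective 1)]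
    ring
  have h2 := Finset.card_le_univ (S ∪ S.image (· + 1))
  rw [hcard] at h2
  simp only [Finset.card_univ, Fintype.card_fin] at h2
  omega

theorem nocopy (k n : ℕ) (hk : 1 ≤ k) :
    ¬ containsCopy (SimpleGraph.cycleGraph (2 * k + 1))
        (Finset.univ.filter (fun F : Finset (Fin n) => k * n < (2 * k + 1) * F.card)) := by
  rintro ⟨f, hinj, hmem, hadj⟩
  -- each f v has card ≥ t+1 where t = k*n/(2k+1)
  set t := k * n / (2 * k + 1) with ht
  have hcard : ∀ v, t + 1 ≤ (f v).card := by
    intro v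
    have := hmem v
    rw [Finset.mem_filter] at this
    have h := this.2
    have h2 : k*n < (f v).card * (2*k+1) := by rw [mul_comm ((f v).card)]; exact h
    have := (Nat.div_lt_iff_lt_mul (show 0 < 2*k+1 by omega)).mpr h2
    omega
  have hsum : k * n < ∑ v : Fin (2*k+1), (f v).card := by
    calc k * n < (2*k+1) * (t+1) := by
          exact Nat.lt_mul_div_succ (k*n) (by omega)
      _ = ∑ _v : Fin (2*k+1), (t+1) := by simp [Finset.sum_const, mul_comm]
      _ ≤ _ := Finset.sum_le_sum fun v _ => hcard v
  -- double counting
  have hswap : ∑ v : Fin (2*k+1), (f v).card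
      = ∑ x : Fin n, (Finset.univ.filter (fun v => x ∈ f v)).card := by
    simp only [Finset.card_eq_sum_ones]
    rw [Finset.sum_comm' (s := Finset.univ) (t := fun v => f v)
      (t' := Finset.univ) (s' := fun x => Finset.univ.filter (fun v => x ∈ f v))]
    intro v x
    simp
  rw [hswap] at hsum
  have hx : ∃ x : Fin n, k + 1 ≤ (Finset.univ.filter (fun v => x ∈ f v)).card := by
    by_contra h
    push_neg at h
    have : ∑ x : Fin n, (Finset.univ.filter (fun v => x ∈ f v)).card ≤ ∑ _x : Fin n, k :=
      Finset.sum_le_sum fun x _ => by have := h x; omega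
    simp [Finset.sum_const, mul_comm] at this
    omega
  obtain ⟨x, hx⟩ := hx
  set S := Finset.univ.filter (fun v => x ∈ f v) with hS
  have hind : ∀ u ∈ S, ∀ v ∈ S, ¬ (SimpleGraph.cycleGraph (2*k+1)).Adj u v := by
    intro u hu v hv hadj'
    have h1 := (hadj u v hadj').2
    rw [hS, Finset.mem_filter] at hu hv
    exact Finset.disjoint_left.mp h1 hu.2 hv.2
  have := indep_cycle k hk S hind
  omega

theorem countpart (k n : ℕ) (hk : 1 ≤ k) :
    2 ^ n - vex n (SimpleGraph.cycleGraph (2 * k + 1)) ≤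
      ∑ i ∈ Finset.range (k * n / (2 * k + 1) + 1), n.choose i := by
  set t := k * n / (2 * k + 1) with ht
  set A := Finset.univ.filter (fun F : Finset (Fin n) => k * n < (2 * k + 1) * F.card) with hA
  set B := Finset.univ.filter (fun F : Finset (Fin n) => F.card ≤ t) with hB
  -- A and B partition
  have hAB : A.card + B.card = 2 ^ n := by
    have hcompl : B = Aᶜ := by
      ext F
      simp only [hA, hB, Finset.mem_filter, Finset.mem_compl, Finset.mem_univ, true_and]
      rw [ht, Nat.le_div_iff_mul_le (show 0 < 2*k+1 by omega), mul_comm (F.card)]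
      omega
    rw [hcompl, Finset.card_compl]
    have : Fintype.card (Finset (Fin n)) = 2 ^ n := by simp
    rw [this]
    have hle : A.card ≤ 2 ^ n := by simpa using Finset.card_le_univ A
    omega
  -- B.card = sum of binomials
  have hBcard : B.card = ∑ i ∈ Finset.range (t + 1), n.choose i := by
    rw [Finset.card_eq_sum_card_fiberwise (f := Finset.card) (t := Finset.range (t+1))
      (fun F hF => by simp only [Finset.mem_coe, hB, Finset.mem_filter, Finset.mem_univ, true_and] at hF; simp only [Finset.mem_coe, Finset.mem_range]; omega)]
    apply Finset.sum_congr rfl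
    intro i hi
    rw [Finset.mem_range] at hi
    have : B.filter (fun F => F.card = i) = Finset.univ.filter (fun F : Finset (Fin n) => F.card = i) := by
      ext F
      simp only [hB, Finset.mem_filter, Finset.mem_univ, true_and]
      constructor
      · rintro ⟨_, h⟩; exact h
      · intro h; exact ⟨by omega, h⟩
    rw [this, ← Finset.powerset_univ, ← Finset.powersetCard_eq_filter,
      Finset.card_powersetCard]
    simp
  -- vex ≥ A.card
  have hvex : A.card ≤ vex n (SimpleGraph.cycleGraph (2 * k + 1)) := by
    apply le_csSup
    · refine ⟨2 ^ n, ?_⟩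
      rintro m ⟨F, _, rfl⟩
      have := Finset.card_le_univ F
      simpa using this
    · exact ⟨A, nocopy k n hk, rfl⟩
  rw [← hBcard]
  clear_value t
  clear ht
  omega


/-- For `k ≥ 1`, the family `F_k = {F ⊆ [n] : |F| > kn/(2k+1)}` induces no copy of the odd cycle
`C_{2k+1}` in the Kneser cube; consequently
`2^n - vex(n, C_{2k+1}) ≤ ∑_{i=0}^{⌊kn/(2k+1)⌋} C(n,i)`. -/
theorem stmt_5 (k n : ℕ) (hk : 1 ≤ k) :
    ¬ containsCopy (SimpleGraph.cycleGraph (2 * k + 1))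
        (Finset.univ.filter (fun F : Finset (Fin n) => k * n < (2 * k + 1) * F.card)) ∧
    2 ^ n - vex n (SimpleGraph.cycleGraph (2 * k + 1)) ≤
      ∑ i ∈ Finset.range (k * n / (2 * k + 1) + 1), n.choose i :=
  ⟨nocopy k n hk, countpart k n hk⟩
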